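/- For a monoid S the following are equivalent: (i) for every family {A_i : i ∈ I} of right S-acts, if the coproduct ⨆_{i∈I} A_i is InD-injective then each A_i is InD-injective; (ii) for every family {A_i : i ∈ I} of right S-acts, if the coproduct ⨆_{i∈I} A_i is PInD-injective then each A_i is PInD-injective; (iii) S is not left reversible or S contains a left zero. -/

import Mathlib

universe u

/-- A right `S`-act structure on a nonempty type `A`: a right action of the monoid `S`. -/
class RightAct (S : Type u) [Monoid S] (A : Type u) : Type u where
  act : A → S → A
  act_one : ∀ a : A, act a 1 = a
  act_mul : ∀ (a : A) (s t : S), act (act a s) t = act a (s * t)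
  nonempty : Nonempty A

infixl:70 " ⊛ " => RightAct.act

/-- `S` is left reversible: every two right ideals (equiv. principal ones) intersect. -/
def LeftReversible (S : Type u) [Monoid S] : Prop :=
  ∀ a b : S, ∃ u v : S, a * u = b * v

/-- A left zero element of the monoid `S`. -/
def IsLeftZero (S : Type u) [Monoid S] (z : S) : Prop :=
  ∀ s : S, z * s = z

/-- `f : A → B` is a homomorphism of right `S`-acts. -/
def IsActHom (S : Type u) [Monoid S] {A B : Type u} [RightAct S A] [RightAct S B]
    (f : A → B) : Prop :=
  ∀ (a : A) (s : S), f (a ⊛ s) = f a ⊛ s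

/-- The restriction of `f : A → B` to the subset `C` is a homomorphism of right `S`-acts. -/
def IsActHomOn (S : Type u) [Monoid S] {A B : Type u} [RightAct S A] [RightAct S B]
    (f : A → B) (C : Set A) : Prop :=
  ∀ a ∈ C, ∀ s : S, f (a ⊛ s) = f a ⊛ s

/-- A subact: a nonempty subset closed under the action. -/
def IsSubact (S : Type u) [Monoid S] {A : Type u} [RightAct S A] (C : Set A) : Prop :=
  C.Nonempty ∧ ∀ a ∈ C, ∀ s : S, a ⊛ s ∈ C

/-- A zero element of an act: fixed by the action of every `s ∈ S`. -/
def IsZeroElem (S : Type u) [Monoid S] {A : Type u} [RightAct S A] (θ : A) : Prop :=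
  ∀ s : S, θ ⊛ s = θ

/-- A subset `D` (viewed as an act) is decomposable: it is the disjoint union of two
nonempty subacts. -/
def DecomposableSet (S : Type u) [Monoid S] {A : Type u} [RightAct S A] (D : Set A) : Prop :=
  ∃ B C : Set A, IsSubact S B ∧ IsSubact S C ∧ B ∪ C = D ∧ B ∩ C = ∅

/-- A subset (viewed as an act) is indecomposable. -/
def IndecomposableSet (S : Type u) [Monoid S] {A : Type u} [RightAct S A] (D : Set A) : Prop :=
  ¬ DecomposableSet S D

/-- The act `A` is decomposable. -/
def Decomposable (S : Type u) [Monoid S] (A : Type u) [RightAct S A] : Prop :=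
  DecomposableSet S (Set.univ : Set A)

/-- The act `A` is indecomposable. -/
def Indecomposable (S : Type u) [Monoid S] (A : Type u) [RightAct S A] : Prop :=
  ¬ Decomposable S A

/-- A cyclic act: generated by a single element. -/
def CyclicAct (S : Type u) [Monoid S] (A : Type u) [RightAct S A] : Prop :=
  ∃ a : A, ∀ x : A, ∃ s : S, x = a ⊛ s

/-- `A` is a retract of `B`. -/
def IsRetractOf (S : Type u) [Monoid S] (A B : Type u) [RightAct S A] [RightAct S B] : Prop :=
  ∃ (i : A → B) (p : B → A), IsActHom S i ∧ IsActHom S p ∧ ∀ a : A, p (i a) = a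

/-- `Q` is an injective act: every homomorphism from a subact `C` of any act `B` into `Q`
extends to `B`. -/
def ActInjective (S : Type u) [Monoid S] (Q : Type u) [RightAct S Q] : Prop :=
  ∀ (B : Type u) [RightAct S B], ∀ C : Set B, IsSubact S C →
    ∀ f : B → Q, IsActHomOn S f C →
      ∃ g : B → Q, IsActHom S g ∧ Set.EqOn g f C

/-- `Q` is InC-injective: injective relative to all embeddings into indecomposable acts. -/
def InCInjective (S : Type u) [Monoid S] (Q : Type u) [RightAct S Q] : Prop :=
  ∀ (B : Type u) [RightAct S B], Indecomposable S B → ∀ C : Set B, IsSubact S C →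
    ∀ f : B → Q, IsActHomOn S f C →
      ∃ g : B → Q, IsActHom S g ∧ Set.EqOn g f C

/-- `Q` is InD-injective: injective relative to all embeddings of indecomposable acts. -/
def InDInjective (S : Type u) [Monoid S] (Q : Type u) [RightAct S Q] : Prop :=
  ∀ (B : Type u) [RightAct S B], ∀ C : Set B, IsSubact S C → IndecomposableSet S C →
    ∀ f : B → Q, IsActHomOn S f C →
      ∃ g : B → Q, IsActHom S g ∧ Set.EqOn g f C

/-- `Q` is PInD-injective: every monomorphism from an indecomposable subact extends. -/
def PInDInjective (S : Type u) [Monoid S] (Q : Type u) [RightAct S Q] : Prop :=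
  ∀ (B : Type u) [RightAct S B], ∀ C : Set B, IsSubact S C → IndecomposableSet S C →
    ∀ f : B → Q, IsActHomOn S f C → Set.InjOn f C →
      ∃ g : B → Q, IsActHom S g ∧ Set.EqOn g f C

/-- `A` is quasi injective: homomorphisms from subacts of `A` to `A` extend to `A`. -/
def QuasiInjective (S : Type u) [Monoid S] (A : Type u) [RightAct S A] : Prop :=
  ∀ C : Set A, IsSubact S C → ∀ f : A → A, IsActHomOn S f C →
    ∃ g : A → A, IsActHom S g ∧ Set.EqOn g f C

/-- `A` is pseudo injective: monomorphisms from subacts of any act into `A` extend. -/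
def PseudoInjective (S : Type u) [Monoid S] (A : Type u) [RightAct S A] : Prop :=
  ∀ (C : Type u) [RightAct S C], ∀ B : Set C, IsSubact S B →
    ∀ f : C → A, IsActHomOn S f B → Set.InjOn f B →
      ∃ g : C → A, IsActHom S g ∧ Set.EqOn g f B

/-- A subact `Q` of `A` (viewed as an act in its own right) is injective. -/
def ActInjectiveSet (S : Type u) [Monoid S] {A : Type u} [RightAct S A] (Q : Set A) : Prop :=
  ∀ (B : Type u) [RightAct S B], ∀ C : Set B, IsSubact S C →
    ∀ f : B → A, IsActHomOn S f C → (∀ c ∈ C, f c ∈ Q) →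
      ∃ g : B → A, IsActHom S g ∧ (∀ b : B, g b ∈ Q) ∧ Set.EqOn g f C

/-- A subact `Q` of `A` (viewed as an act in its own right) is InD-injective. -/
def InDInjectiveSet (S : Type u) [Monoid S] {A : Type u} [RightAct S A] (Q : Set A) : Prop :=
  ∀ (B : Type u) [RightAct S B], ∀ C : Set B, IsSubact S C → IndecomposableSet S C →
    ∀ f : B → A, IsActHomOn S f C → (∀ c ∈ C, f c ∈ Q) →
      ∃ g : B → A, IsActHom S g ∧ (∀ b : B, g b ∈ Q) ∧ Set.EqOn g f C

/-- A subact `Q` of `A` (viewed as an act in its own right) is PInD-injective. -/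
def PInDInjectiveSet (S : Type u) [Monoid S] {A : Type u} [RightAct S A] (Q : Set A) : Prop :=
  ∀ (B : Type u) [RightAct S B], ∀ C : Set B, IsSubact S C → IndecomposableSet S C →
    ∀ f : B → A, IsActHomOn S f C → Set.InjOn f C → (∀ c ∈ C, f c ∈ Q) →
      ∃ g : B → A, IsActHom S g ∧ (∀ b : B, g b ∈ Q) ∧ Set.EqOn g f C

/-- The monoid `S` as a right act over itself, by multiplication. -/
instance selfAct (S : Type u) [Monoid S] : RightAct S S where
  act a s := a * s
  act_one := mul_one
  act_mul a s t := mul_assoc a s t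
  nonempty := ⟨1⟩

/-- `Q` is weakly injective: homomorphisms from right ideals of `S` into `Q` extend to `S`. -/
def WeaklyInjective (S : Type u) [Monoid S] (Q : Type u) [RightAct S Q] : Prop :=
  ∀ I : Set S, IsSubact S I → ∀ f : S → Q, IsActHomOn S f I →
    ∃ g : S → Q, IsActHom S g ∧ Set.EqOn g f I

/-- The relation whose equivalence closure has the indecomposable components as classes. -/
def ActRel (S : Type u) [Monoid S] {A : Type u} [RightAct S A] (a b : A) : Prop :=
  ∃ s : S, b = a ⊛ s

/-- The indecomposable component of the element `a` of an act. -/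
def ActComponent (S : Type u) [Monoid S] {A : Type u} [RightAct S A] (a : A) : Set A :=
  {b | Relation.EqvGen (ActRel S) a b}

/-- The coproduct (disjoint union) of a family of acts. -/
instance sigmaAct (S : Type u) [Monoid S] {I : Type u} [Nonempty I] (A : I → Type u)
    [∀ i, RightAct S (A i)] : RightAct S (Σ i, A i) where
  act x s := ⟨x.1, x.2 ⊛ s⟩
  act_one x := by cases x; simp [RightAct.act_one]
  act_mul x s t := by cases x; simp [RightAct.act_mul]
  nonempty := ⟨⟨Classical.arbitrary I, Classical.choice (RightAct.nonempty (S := S))⟩⟩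


section Aux

variable {S : Type u} [Monoid S]

/-- Homomorphisms preserve the component-generating relation. -/
lemma eqvGen_map {A B : Type u} [RightAct S A] [RightAct S B] {g : A → B}
    (hg : IsActHom S g) {x y : A} (h : Relation.EqvGen (ActRel S) x y) :
    Relation.EqvGen (ActRel S) (g x) (g y) := by
  induction h with
  | rel x y h => rcases h with ⟨s, rfl⟩; exact Relation.EqvGen.rel _ _ ⟨s, hg x s⟩
  | refl x => exact Relation.EqvGen.refl _
  | symm x y h ih => exact ih.symm _ _
  | trans x y z h₁ h₂ ih₁ ih₂ => exact ih₁.trans _ _ _ ih₂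

lemma actComponent_isSubact {A : Type u} [RightAct S A] (a : A) :
    IsSubact S (ActComponent S a) := by
  constructor
  · exact ⟨a, Relation.EqvGen.refl a⟩
  · intro x hx s
    exact Relation.EqvGen.trans _ _ _ hx (Relation.EqvGen.rel _ _ ⟨s, rfl⟩)

lemma actComponent_indecomposable {A : Type u} [RightAct S A] (a : A) :
    IndecomposableSet S (ActComponent S a) := by
  rintro ⟨B₁, B₂, hB₁, hB₂, hunion, hdisj⟩
  have hsat : ∀ x y : A, x ∈ B₁ ∪ B₂ → Relation.EqvGen (ActRel S) x y → y ∈ B₁ ∪ B₂ := by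
    intro x y hx hxy
    have hx' : Relation.EqvGen (ActRel S) a x := by rw [hunion] at hx; exact hx
    have : Relation.EqvGen (ActRel S) a y := hx'.trans _ _ _ hxy
    rw [hunion]; exact this
  have key : ∀ x y : A, Relation.EqvGen (ActRel S) x y → x ∈ B₁ ∪ B₂ → y ∈ B₁ ∪ B₂ →
      ((x ∈ B₁ ↔ y ∈ B₁) ∧ (x ∈ B₂ ↔ y ∈ B₂)) := by
    intro x y h
    induction h with
    | rel x y h =>
      rcases h with ⟨s, rfl⟩
      intro hx _
      constructor
      · constructor
        · intro h1; exact hB₁.2 x h1 s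
        · intro h1
          rcases hx with hx | hx
          · exact hx
          · exact absurd (Set.eq_empty_iff_forall_notMem.mp hdisj _ ⟨h1, hB₂.2 x hx s⟩) (by simp)
      · constructor
        · intro h2; exact hB₂.2 x h2 s
        · intro h2
          rcases hx with hx | hx
          · exact absurd (Set.eq_empty_iff_forall_notMem.mp hdisj _ ⟨hB₁.2 x hx s, h2⟩) (by simp)
          · exact hx
    | refl x => intro _ _; exact ⟨Iff.rfl, Iff.rfl⟩
    | symm x y h ih => intro hy hx; exact ⟨(ih hx hy).1.symm, (ih hx hy).2.symm⟩
    | trans x y z h₁ h₂ ih₁ ih₂ =>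
      intro hx hz
      have hy : y ∈ B₁ ∪ B₂ := hsat x y hx h₁
      exact ⟨(ih₁ hx hy).1.trans (ih₂ hy hz).1, (ih₁ hx hy).2.trans (ih₂ hy hz).2⟩
  obtain ⟨b₁, hb₁⟩ := hB₁.1
  obtain ⟨b₂, hb₂⟩ := hB₂.1
  have h1 : b₁ ∈ B₁ ∪ B₂ := Or.inl hb₁
  have h2 : b₂ ∈ B₁ ∪ B₂ := Or.inr hb₂
  have e1 : Relation.EqvGen (ActRel S) a b₁ := by rw [hunion] at h1; exact h1
  have e2 : Relation.EqvGen (ActRel S) a b₂ := by rw [hunion] at h2; exact h2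
  have e12 : Relation.EqvGen (ActRel S) b₁ b₂ := (e1.symm _ _).trans _ _ _ e2
  have := (key b₁ b₂ e12 h1 h2).1.mp hb₁
  exact absurd (Set.eq_empty_iff_forall_notMem.mp hdisj b₂ ⟨this, hb₂⟩) (by simp)

lemma image_isSubact {A B : Type u} [RightAct S A] [RightAct S B] {C : Set A} {f : A → B}
    (hC : IsSubact S C) (hf : IsActHomOn S f C) : IsSubact S (f '' C) := by
  constructor
  · exact hC.1.image f
  · rintro y ⟨c, hc, rfl⟩ s
    exact ⟨c ⊛ s, hC.2 c hc s, (hf c hc s).symm ▸ rfl⟩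

lemma image_indecomposable {A B : Type u} [RightAct S A] [RightAct S B] {C : Set A} {f : A → B}
    (hC : IsSubact S C) (hf : IsActHomOn S f C) (hInd : IndecomposableSet S C) :
    IndecomposableSet S (f '' C) := by
  rintro ⟨B₁, B₂, h1, h2, hu, hd⟩
  apply hInd
  refine ⟨{x | x ∈ C ∧ f x ∈ B₁}, {x | x ∈ C ∧ f x ∈ B₂}, ⟨?_, ?_⟩, ⟨?_, ?_⟩, ?_, ?_⟩
  · obtain ⟨y, hy⟩ := h1.1
    have : y ∈ f '' C := by rw [← hu]; exact Or.inl hy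
    rcases this with ⟨c, hc, rfl⟩
    exact ⟨c, hc, hy⟩
  · rintro x ⟨hx, hfx⟩ s
    exact ⟨hC.2 x hx s, by rw [hf x hx s]; exact h1.2 _ hfx s⟩
  · obtain ⟨y, hy⟩ := h2.1
    have : y ∈ f '' C := by rw [← hu]; exact Or.inr hy
    rcases this with ⟨c, hc, rfl⟩
    exact ⟨c, hc, hy⟩
  · rintro x ⟨hx, hfx⟩ s
    exact ⟨hC.2 x hx s, by rw [hf x hx s]; exact h2.2 _ hfx s⟩
  · apply Set.eq_of_subset_of_subset
    · rintro x (⟨hx, _⟩ | ⟨hx, _⟩) <;> exact hx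
    · intro x hx
      have : f x ∈ B₁ ∪ B₂ := by rw [hu]; exact ⟨x, hx, rfl⟩
      rcases this with h | h
      · exact Or.inl ⟨hx, h⟩
      · exact Or.inr ⟨hx, h⟩
  · apply Set.eq_empty_iff_forall_notMem.mpr
    rintro x ⟨⟨hx, hx1⟩, ⟨-, hx2⟩⟩
    exact Set.eq_empty_iff_forall_notMem.mp hd (f x) ⟨hx1, hx2⟩

end Aux

section Aux2

variable {S : Type u} [Monoid S]

instance punitRightAct : RightAct S PUnit.{u+1} where
  act _ _ := PUnit.unit
  act_one a := by cases a; rfl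
  act_mul _ _ _ := rfl
  nonempty := ⟨PUnit.unit⟩

instance sumRightAct {A B : Type u} [RightAct S A] [RightAct S B] : RightAct S (A ⊕ B) where
  act x s := match x with
    | Sum.inl a => Sum.inl (a ⊛ s)
    | Sum.inr b => Sum.inr (b ⊛ s)
  act_one x := by cases x <;> simp [RightAct.act_one]
  act_mul x s t := by cases x <;> simp [RightAct.act_mul]
  nonempty := ⟨Sum.inl (Classical.choice (RightAct.nonempty (S := S)))⟩

lemma sum_inl_act {A B : Type u} [RightAct S A] [RightAct S B] (a : A) (s : S) :
    (Sum.inl a : A ⊕ B) ⊛ s = Sum.inl (a ⊛ s) := rfl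

lemma sum_inr_act {A B : Type u} [RightAct S A] [RightAct S B] (b : B) (s : S) :
    (Sum.inr b : A ⊕ B) ⊛ s = Sum.inr (b ⊛ s) := rfl

lemma eqvGen_sum_inl {A B : Type u} [RightAct S A] [RightAct S B] {x y : A ⊕ B}
    (h : Relation.EqvGen (ActRel S) x y) : (∃ a, x = Sum.inl a) ↔ (∃ a, y = Sum.inl a) := by
  induction h with
  | rel x y h =>
    rcases h with ⟨s, rfl⟩
    cases x with
    | inl a => simp [sum_inl_act]
    | inr b => simp [sum_inr_act]
  | refl x => rfl
  | symm x y h ih => exact ih.symm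
  | trans x y z h₁ h₂ ih₁ ih₂ => exact ih₁.trans ih₂

lemma inD_imp_pInD {Q : Type u} [RightAct S Q] (h : InDInjective S Q) : PInDInjective S Q :=
  fun B _ C hC hI f hf _ => h B C hC hI f hf

/-- Every PInD-injective act has a zero element. -/
lemma pInD_has_zero {Q : Type u} [RightAct S Q] (h : PInDInjective S Q) :
    ∃ θ : Q, IsZeroElem S θ := by
  classical
  obtain ⟨u₀⟩ : Nonempty Q := RightAct.nonempty (S := S)
  set B : Type u := Q ⊕ PUnit.{u+1} with hB
  set C : Set B := ActComponent S (Sum.inl u₀) with hCdef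
  have hinl : ∀ x ∈ C, ∃ a : Q, x = Sum.inl a := by
    intro x hx
    exact (eqvGen_sum_inl (S := S) hx).mp ⟨u₀, rfl⟩
  have hC : IsSubact S C := actComponent_isSubact _
  have hInd : IndecomposableSet S C := actComponent_indecomposable _
  set f : B → Q := Sum.elim id (fun _ => u₀) with hf
  have hfhom : IsActHomOn S f C := by
    intro x hx s
    obtain ⟨a, rfl⟩ := hinl x hx
    rfl
  have hfinj : Set.InjOn f C := by
    intro x hx y hy hxy
    obtain ⟨a, rfl⟩ := hinl x hx
    obtain ⟨b, rfl⟩ := hinl y hy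
    simp only [hf, Sum.elim_inl, id] at hxy
    exact congrArg Sum.inl hxy
  obtain ⟨g, hg, -⟩ := h B C hC hInd f hfhom hfinj
  refine ⟨g (Sum.inr PUnit.unit), fun s => ?_⟩
  have := (hg (Sum.inr PUnit.unit) s).symm
  rwa [sum_inr_act] at this

lemma eqvGen_sigma_fst {I : Type u} [Nonempty I] {A : I → Type u} [∀ i, RightAct S (A i)]
    {p q : Σ i, A i} (h : Relation.EqvGen (ActRel S) p q) : p.1 = q.1 := by
  induction h with
  | rel x y h => rcases h with ⟨s, rfl⟩; rfl
  | refl x => rfl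
  | symm x y h ih => exact ih.symm
  | trans x y z h₁ h₂ ih₁ ih₂ => exact ih₁.trans ih₂

lemma sigma_act_mk {I : Type u} [Nonempty I] {A : I → Type u} [∀ i, RightAct S (A i)]
    (i : I) (a : A i) (s : S) : (⟨i, a⟩ : Σ i, A i) ⊛ s = ⟨i, a ⊛ s⟩ := rfl

/-- A homomorphism on an indecomposable subact into a coproduct has image in a single fiber. -/
lemma fiber_const {I : Type u} [Nonempty I] {A : I → Type u} [∀ i, RightAct S (A i)]
    {B : Type u} [RightAct S B] {C : Set B} (hC : IsSubact S C)
    (hInd : IndecomposableSet S C) {f : B → Σ i, A i} (hf : IsActHomOn S f C) :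
    ∃ i₀, ∀ c ∈ C, (f c).1 = i₀ := by
  classical
  obtain ⟨c₀, hc₀⟩ := hC.1
  refine ⟨(f c₀).1, ?_⟩
  by_contra hcon
  push_neg at hcon
  obtain ⟨c₁, hc₁, hne⟩ := hcon
  apply hInd
  refine ⟨{c | c ∈ C ∧ (f c).1 = (f c₀).1}, {c | c ∈ C ∧ (f c).1 ≠ (f c₀).1},
    ⟨⟨c₀, hc₀, rfl⟩, ?_⟩, ⟨⟨c₁, hc₁, hne⟩, ?_⟩, ?_, ?_⟩
  · rintro x ⟨hx, he⟩ s
    refine ⟨hC.2 x hx s, ?_⟩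
    rw [hf x hx s]
    exact he
  · rintro x ⟨hx, he⟩ s
    refine ⟨hC.2 x hx s, ?_⟩
    rw [hf x hx s]
    exact he
  · apply Set.eq_of_subset_of_subset
    · rintro x (⟨hx, -⟩ | ⟨hx, -⟩) <;> exact hx
    · intro x hx
      by_cases he : (f x).1 = (f c₀).1
      · exact Or.inl ⟨hx, he⟩
      · exact Or.inr ⟨hx, he⟩
  · apply Set.eq_empty_iff_forall_notMem.mpr
    rintro x ⟨⟨-, h1⟩, ⟨-, h2⟩⟩
    exact h2 h1

end Aux2

section Aux3

variable {S : Type u} [Monoid S]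

/-- If `A i` has a zero, InD-injectivity transfers from the coproduct to `A i`. -/
lemma component_inD_of_zero {I : Type u} [Nonempty I] {A : I → Type u} [∀ i, RightAct S (A i)]
    (h : InDInjective S (Σ i, A i)) (i : I) (θ : A i) (hθ : IsZeroElem S θ) :
    InDInjective S (A i) := by
  classical
  intro B _ C hC hInd f hf
  set F : B → Σ i, A i := fun b => ⟨i, f b⟩ with hF
  have hFhom : IsActHomOn S F C := by
    intro c hc s
    show (⟨i, f (c ⊛ s)⟩ : Σ i, A i) = ⟨i, f c⟩ ⊛ s
    rw [sigma_act_mk, hf c hc s]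
  obtain ⟨G, hG, hEqG⟩ := h B C hC hInd F hFhom
  set p : (Σ i, A i) → A i := fun x => if hx : x.1 = i then hx ▸ x.2 else θ with hp
  have hpact : ∀ (x : Σ i, A i) (s : S), p (x ⊛ s) = p x ⊛ s := by
    rintro ⟨j, v⟩ s
    by_cases hj : j = i
    · subst hj
      simp [hp, sigma_act_mk]
    · rw [sigma_act_mk]
      simp only [hp, dif_neg hj]
      exact (hθ s).symm
  refine ⟨fun b => p (G b), fun b s => by show p (G (b ⊛ s)) = p (G b) ⊛ s; rw [hG b s, hpact], fun c hc => ?_⟩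
  show p (G c) = f c
  rw [hEqG hc]
  simp [hp, hF]

/-- If `A i` has a zero, PInD-injectivity transfers from the coproduct to `A i`. -/
lemma component_pInD_of_zero {I : Type u} [Nonempty I] {A : I → Type u} [∀ i, RightAct S (A i)]
    (h : PInDInjective S (Σ i, A i)) (i : I) (θ : A i) (hθ : IsZeroElem S θ) :
    PInDInjective S (A i) := by
  classical
  intro B _ C hC hInd f hf hfinj
  set F : B → Σ i, A i := fun b => ⟨i, f b⟩ with hF
  have hFhom : IsActHomOn S F C := by
    intro c hc s
    show (⟨i, f (c ⊛ s)⟩ : Σ i, A i) = ⟨i, f c⟩ ⊛ s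
    rw [sigma_act_mk, hf c hc s]
  have hFinj : Set.InjOn F C := by
    intro x hx y hy hxy
    apply hfinj hx hy
    have := (Sigma.mk.inj_iff.mp hxy).2
    exact eq_of_heq this
  obtain ⟨G, hG, hEqG⟩ := h B C hC hInd F hFhom hFinj
  set p : (Σ i, A i) → A i := fun x => if hx : x.1 = i then hx ▸ x.2 else θ with hp
  have hpact : ∀ (x : Σ i, A i) (s : S), p (x ⊛ s) = p x ⊛ s := by
    rintro ⟨j, v⟩ s
    by_cases hj : j = i
    · subst hj
      simp [hp, sigma_act_mk]
    · rw [sigma_act_mk]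
      simp only [hp, dif_neg hj]
      exact (hθ s).symm
  refine ⟨fun b => p (G b), fun b s => by show p (G (b ⊛ s)) = p (G b) ⊛ s; rw [hG b s, hpact], fun c hc => ?_⟩
  show p (G c) = f c
  rw [hEqG hc]
  simp [hp, hF]

lemma univ_indecomposable : IndecomposableSet S (Set.univ : Set S) := by
  rintro ⟨B₁, B₂, h1, h2, hu, hd⟩
  have h1m : (1 : S) ∈ B₁ ∪ B₂ := by rw [hu]; trivial
  have key : ∀ s : S, (1 : S) ∈ B₁ → s ∈ B₁ := by
    intro s h
    have := h1.2 1 h s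
    rwa [show (1 : S) ⊛ s = s from one_mul s] at this
  have key2 : ∀ s : S, (1 : S) ∈ B₂ → s ∈ B₂ := by
    intro s h
    have := h2.2 1 h s
    rwa [show (1 : S) ⊛ s = s from one_mul s] at this
  rcases h1m with h | h
  · obtain ⟨b₂, hb₂⟩ := h2.1
    exact Set.eq_empty_iff_forall_notMem.mp hd b₂ ⟨key b₂ h, hb₂⟩
  · obtain ⟨b₁, hb₁⟩ := h1.1
    exact Set.eq_empty_iff_forall_notMem.mp hd b₁ ⟨hb₁, key2 b₁ h⟩

end Aux3

section Aux4

variable {S : Type u} [Monoid S]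

/-- If `S` is not left reversible and the coproduct is PInD-injective, each component has
a zero element. -/
lemma zero_of_pInD_sigma_of_not_leftRev {I : Type u} [Nonempty I] {A : I → Type u}
    [∀ i, RightAct S (A i)] (h : PInDInjective S (Σ i, A i)) {a b : S}
    (hab : ∀ u v : S, a * u ≠ b * v) (i : I) : ∃ θ : A i, IsZeroElem S θ := by
  classical
  obtain ⟨q⟩ : Nonempty (A i) := RightAct.nonempty (S := S)
  -- the congruence: collapse aS to a point, and collapse bS by the kernel of x ↦ q ⊛ x
  set r : S → S → Prop := fun x y => x = y ∨ ((∃ u, x = a * u) ∧ (∃ u, y = a * u)) ∨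
    ((∃ u, x = b * u) ∧ (∃ u, y = b * u) ∧ q ⊛ x = q ⊛ y) with hr
  have hrefl : ∀ x, r x x := fun x => Or.inl rfl
  have hsymm : ∀ {x y}, r x y → r y x := by
    rintro x y (rfl | ⟨h1, h2⟩ | ⟨h1, h2, h3⟩)
    · exact Or.inl rfl
    · exact Or.inr (Or.inl ⟨h2, h1⟩)
    · exact Or.inr (Or.inr ⟨h2, h1, h3.symm⟩)
  have hnotab : ∀ {x}, (∃ u, x = a * u) → (∃ u, x = b * u) → False := by
    rintro x ⟨u, rfl⟩ ⟨v, hv⟩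
    exact hab u v hv
  have htrans : ∀ {x y z}, r x y → r y z → r x z := by
    rintro x y z (rfl | ⟨h1, h2⟩ | ⟨h1, h2, h3⟩) hyz
    · exact hyz
    · rcases hyz with rfl | ⟨h3, h4⟩ | ⟨h3, h4, h5⟩
      · exact Or.inr (Or.inl ⟨h1, h2⟩)
      · exact Or.inr (Or.inl ⟨h1, h4⟩)
      · exact absurd (hnotab h2 h3) id
    · rcases hyz with rfl | ⟨h4, h5⟩ | ⟨h4, h5, h6⟩
      · exact Or.inr (Or.inr ⟨h1, h2, h3⟩)
      · exact absurd (hnotab h4 h2) id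
      · exact Or.inr (Or.inr ⟨h1, h5, h3.trans h6⟩)
  have hcong : ∀ (x y s : S), r x y → r (x * s) (y * s) := by
    rintro x y s (rfl | ⟨⟨u, rfl⟩, ⟨v, rfl⟩⟩ | ⟨⟨u, rfl⟩, ⟨v, hv⟩, h3⟩)
    · exact Or.inl rfl
    · exact Or.inr (Or.inl ⟨⟨u * s, mul_assoc _ _ _⟩, ⟨v * s, mul_assoc _ _ _⟩⟩)
    · refine Or.inr (Or.inr ⟨⟨u * s, mul_assoc _ _ _⟩, ⟨v * s, by rw [hv, mul_assoc]⟩, ?_⟩)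
      show q ⊛ (b * u * s) = q ⊛ (y * s)
      rw [← RightAct.act_mul q (b*u) s, ← RightAct.act_mul q y s, h3]
  set st : Setoid S := ⟨r, ⟨hrefl, hsymm, htrans⟩⟩ with hst
  set B : Type u := Quotient st with hBdef
  letI actB : RightAct S B :=
    { act := fun x s => Quotient.map (fun y => y * s) (fun p q hpq => hcong p q s hpq) x
      act_one := by
        rintro ⟨x⟩
        exact congrArg (Quotient.mk st) (mul_one x)
      act_mul := by
        rintro ⟨x⟩ s t
        exact congrArg (Quotient.mk st) (mul_assoc x s t)
      nonempty := ⟨Quotient.mk st 1⟩ }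
  have actB_mk : ∀ (x s : S), (Quotient.mk st x) ⊛ s = Quotient.mk st (x * s) := fun _ _ => rfl
  set φ : S → B := fun u => Quotient.mk st (b * u) with hφ
  have hφhom : IsActHom S φ := by
    intro x s
    show Quotient.mk st (b * (x * s)) = (Quotient.mk st (b * x)) ⊛ s
    rw [actB_mk, mul_assoc]
  set C : Set B := φ '' Set.univ with hCdef
  have hCsub : IsSubact S C := image_isSubact ⟨⟨1, trivial⟩, fun _ _ _ => trivial⟩
    (fun x _ s => hφhom x s)
  have hCind : IndecomposableSet S C :=
    image_indecomposable ⟨⟨1, trivial⟩, fun _ _ _ => trivial⟩ (fun x _ s => hφhom x s)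
      univ_indecomposable
  -- the candidate map into the coproduct
  set sel : B → S := fun y => if hy : ∃ u, Quotient.mk st (b * u) = y then b * Classical.choose hy
    else 1 with hsel
  have hselkey : ∀ u : S, q ⊛ sel (Quotient.mk st (b * u)) = q ⊛ (b * u) := by
    intro u
    have hex : ∃ w, Quotient.mk st (b * w) = Quotient.mk st (b * u) := ⟨u, rfl⟩
    rw [hsel]
    simp only [dif_pos hex]
    have := Quotient.exact (Classical.choose_spec hex)
    rcases this with heq | ⟨h1, h2⟩ | ⟨-, -, h3⟩
    · rw [heq]
    · exact absurd (hnotab h1 ⟨Classical.choose hex, rfl⟩) id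
    · exact h3
  set f : B → (Σ j, A j) := fun y => ⟨i, q ⊛ sel y⟩ with hfdef
  have hfhom : IsActHomOn S f C := by
    rintro y ⟨u, -, rfl⟩ s
    show (⟨i, q ⊛ sel (φ u ⊛ s)⟩ : Σ j, A j) = (⟨i, q ⊛ sel (φ u)⟩ : Σ j, A j) ⊛ s
    rw [sigma_act_mk]
    have h1 : φ u ⊛ s = Quotient.mk st (b * (u * s)) := by
      rw [hφ]; rw [actB_mk, mul_assoc]
    rw [h1, hselkey, hφ, hselkey, ← mul_assoc, ← RightAct.act_mul]
  have hfinj : Set.InjOn f C := by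
    rintro y ⟨u, -, rfl⟩ z ⟨v, -, rfl⟩ hyz
    have h1 : q ⊛ sel (φ u) = q ⊛ sel (φ v) := by
      have := (Sigma.mk.inj_iff.mp hyz).2
      exact eq_of_heq this
    rw [hφ] at h1 ⊢
    rw [hselkey, hselkey] at h1
    exact Quotient.sound (Or.inr (Or.inr ⟨⟨u, rfl⟩, ⟨v, rfl⟩, h1⟩))
  obtain ⟨g, hg, hEq⟩ := h B C hCsub hCind f hfhom hfinj
  -- the zero of B
  set ω : B := Quotient.mk st a with hω
  have hωz : ∀ s : S, ω ⊛ s = ω := by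
    intro s
    rw [hω, actB_mk]
    exact Quotient.sound (Or.inr (Or.inl ⟨⟨s, rfl⟩, ⟨1, (mul_one a).symm⟩⟩))
  -- ω is connected to C
  have hbC : Quotient.mk st b ∈ C := ⟨1, trivial, by rw [hφ]; exact congrArg _ (mul_one b)⟩
  have hchain : Relation.EqvGen (ActRel S) (Quotient.mk st b) ω := by
    have h1 : ActRel S (Quotient.mk st (1 : S)) (Quotient.mk st b) :=
      ⟨b, by rw [actB_mk, one_mul]⟩
    have h2 : ActRel S (Quotient.mk st (1 : S)) ω := ⟨a, by rw [hω, actB_mk, one_mul]⟩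
    exact Relation.EqvGen.trans _ _ _ ((Relation.EqvGen.rel _ _ h1).symm _ _)
      (Relation.EqvGen.rel _ _ h2)
  have hfst : (g ω).1 = i := by
    have := eqvGen_sigma_fst (eqvGen_map hg hchain)
    rw [hEq hbC] at this
    exact this.symm
  obtain ⟨v, hv⟩ : ∃ v : A i, g ω = ⟨i, v⟩ := by
    rcases hgw : g ω with ⟨j, w⟩
    rw [hgw] at hfst
    have hj : j = i := hfst
    subst hj
    exact ⟨w, rfl⟩
  refine ⟨v, fun s => ?_⟩
  have hgz : g ω ⊛ s = g ω := by rw [← hg ω s, hωz]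
  rw [hv, sigma_act_mk] at hgz
  exact eq_of_heq (Sigma.mk.inj_iff.mp hgz).2

end Aux4

/-- The predicate cutting out the zero-free part of the cofree act `S → S`
(with an escape clause making it inhabited in general). -/
def UcP (S : Type u) [Monoid S] (φ : S → S) : Prop :=
  (∀ s : S, ∃ x y : S, φ (s * x) ≠ φ (s * y)) ∨ (∃ z : S, IsLeftZero S z)

/-- The zero-free subact of the cofree act on `S`. -/
def Uc (S : Type u) [Monoid S] : Type u := {φ : S → S // UcP S φ}

instance ucAct (S : Type u) [Monoid S] : RightAct S (Uc S) where
  act φ s := ⟨fun x => φ.1 (s * x), by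
    rcases φ.2 with hφ | hz
    · left
      intro t
      obtain ⟨x, y, hxy⟩ := hφ (s * t)
      exact ⟨x, y, by rwa [mul_assoc, mul_assoc] at hxy⟩
    · right; exact hz⟩
  act_one φ := Subtype.ext (funext fun x => by
    show φ.1 (1 * x) = φ.1 x
    rw [one_mul])
  act_mul φ s t := Subtype.ext (funext fun x => by
    show φ.1 (s * (t * x)) = φ.1 (s * t * x)
    rw [mul_assoc])
  nonempty := by
    by_cases hz : ∃ z : S, IsLeftZero S z
    · exact ⟨⟨id, Or.inr hz⟩⟩
    · refine ⟨⟨id, Or.inl fun s => ?_⟩⟩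
      have h1 : ¬ IsLeftZero S s := fun h => hz ⟨s, h⟩
      unfold IsLeftZero at h1
      push_neg at h1
      obtain ⟨u, hu⟩ := h1
      exact ⟨u, 1, by simpa [mul_one] using hu⟩

lemma uc_act_val {S : Type u} [Monoid S] (φ : Uc S) (s x : S) : (φ ⊛ s).1 x = φ.1 (s * x) := rfl

lemma uc_no_zero {S : Type u} [Monoid S] (hnz : ¬ ∃ z : S, IsLeftZero S z) (θ : Uc S) :
    ¬ IsZeroElem S θ := by
  intro hθ
  have hconst : ∀ s x : S, θ.1 (s * x) = θ.1 x := by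
    intro s x
    have h1 := congrArg Subtype.val (hθ s)
    exact congrFun h1 x
  obtain ⟨x, y, hxy⟩ := θ.2.resolve_right hnz 1
  have hx : θ.1 x = θ.1 1 := by have := hconst x 1; rwa [mul_one] at this
  have hy : θ.1 y = θ.1 1 := by have := hconst y 1; rwa [mul_one] at this
  exact hxy (by rw [one_mul, one_mul, hx, hy])

/-- The two-element family: the zero-free act `Uc S` and the one-element act. -/
def ucFam (S : Type u) [Monoid S] : ULift.{u} Bool → Type u
  | ⟨true⟩ => Uc S
  | ⟨false⟩ => PUnit.{u+1}

instance ucFamAct (S : Type u) [Monoid S] : ∀ i, RightAct S (ucFam S i)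
  | ⟨true⟩ => ucAct S
  | ⟨false⟩ => punitRightAct

instance : Nonempty (ULift.{u} Bool) := ⟨⟨true⟩⟩

section Main
variable {S : Type u} [Monoid S]

lemma sigma_ucFam_inD (hLR : LeftReversible S) (hnz : ¬ ∃ z : S, IsLeftZero S z) :
    InDInjective S (Σ i, ucFam S i) := by
  classical
  intro B _ C hC hInd f hf
  obtain ⟨i₀, hi₀⟩ := fiber_const hC hInd hf
  rcases i₀ with ⟨bi⟩
  cases bi with
  | false =>
    refine ⟨fun _ => ⟨⟨false⟩, PUnit.unit⟩, fun b s => rfl, fun c hc => ?_⟩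
    have h1 : (f c).1 = ⟨false⟩ := hi₀ c hc
    rcases hfe : f c with ⟨j, v⟩
    rw [hfe] at h1
    have hj : j = (⟨false⟩ : ULift.{u} Bool) := h1
    subst hj
    cases v
    rfl
  | true =>
    have hex : ∀ c ∈ C, ∃ v : Uc S, f c = ⟨⟨true⟩, v⟩ := by
      intro c hc
      have h1 : (f c).1 = ⟨true⟩ := hi₀ c hc
      rcases hfe : f c with ⟨j, w⟩
      rw [hfe] at h1
      have hj : j = (⟨true⟩ : ULift.{u} Bool) := h1
      subst hj
      exact ⟨w, rfl⟩
    set f₀ : B → Uc S := fun x => if hx : ∃ v : Uc S, f x = ⟨⟨true⟩, v⟩ then Classical.choose hx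
      else Classical.choice (RightAct.nonempty (S := S) (A := Uc S)) with hf₀
    have hfc : ∀ c ∈ C, f c = ⟨⟨true⟩, f₀ c⟩ := by
      intro c hc
      have hx : ∃ v : Uc S, f c = ⟨⟨true⟩, v⟩ := hex c hc
      rw [hf₀]
      simp only [dif_pos hx]
      exact Classical.choose_spec hx
    have hf₀hom : ∀ c ∈ C, ∀ s : S, f₀ (c ⊛ s) = f₀ c ⊛ s := by
      intro c hc s
      have h1 := hf c hc s
      rw [hfc c hc, hfc (c ⊛ s) (hC.2 c hc s)] at h1
      exact eq_of_heq (Sigma.mk.inj_iff.mp (h1.trans (sigma_act_mk _ _ _))).2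
    set gh : B → S := fun x => if x ∈ C then (f₀ x).1 1 else 1 with hgh
    have hkey : ∀ c ∈ C, ∀ w : S, gh (c ⊛ w) = (f₀ c).1 w := by
      intro c hc w
      have hcw : c ⊛ w ∈ C := hC.2 c hc w
      rw [hgh]
      simp only [if_pos hcw]
      rw [hf₀hom c hc w, uc_act_val, mul_one]
    set D : Set B := {x | ∃ u : S, x ⊛ u ∈ C} with hD
    have hCD : C ⊆ D := fun c hc => ⟨1, by rwa [RightAct.act_one]⟩
    have hDcl : ∀ x ∈ D, ∀ t : S, x ⊛ t ∈ D := by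
      rintro x ⟨u, hu⟩ t
      obtain ⟨p, r, hpr⟩ := hLR t u
      refine ⟨p, ?_⟩
      rw [RightAct.act_mul, hpr, ← RightAct.act_mul]
      exact hC.2 _ hu r
    have hDncl : ∀ x, x ∉ D → ∀ t : S, x ⊛ t ∉ D := by
      rintro x hx t ⟨u, hu⟩
      exact hx ⟨t * u, by rwa [← RightAct.act_mul]⟩
    have hstep : ∀ (x : B) (s v w : S), x ⊛ (s * (v * w)) = ((x ⊛ s) ⊛ v) ⊛ w := by
      intro x s v w
      rw [RightAct.act_mul, RightAct.act_mul]
    have hprop : ∀ x ∈ D, UcP S (fun w => gh (x ⊛ w)) := by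
      intro x hx
      left
      intro s
      obtain ⟨v, hv⟩ := hDcl x hx s
      obtain ⟨y, z, hyz⟩ := ((f₀ ((x ⊛ s) ⊛ v)).2.resolve_right hnz) 1
      rw [one_mul, one_mul] at hyz
      refine ⟨v * y, v * z, ?_⟩
      show gh (x ⊛ (s * (v * y))) ≠ gh (x ⊛ (s * (v * z)))
      rw [hstep, hstep, hkey _ hv y, hkey _ hv z]
      exact hyz
    refine ⟨fun x => if hx : x ∈ D then ⟨⟨true⟩, (show ucFam S ⟨true⟩ from
        (⟨fun w => gh (x ⊛ w), hprop x hx⟩ : Uc S))⟩ else ⟨⟨false⟩, PUnit.unit⟩, ?_, ?_⟩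
    · intro x s
      by_cases hx : x ∈ D
      · have hxs : x ⊛ s ∈ D := hDcl x hx s
        simp only [dif_pos hx, dif_pos hxs]
        refine Eq.trans ?_ (sigma_act_mk _ _ _).symm
        refine congrArg (fun v => (⟨⟨true⟩, v⟩ : Σ i, ucFam S i)) ?_
        apply Subtype.ext
        funext w
        show gh ((x ⊛ s) ⊛ w) = gh (x ⊛ (s * w))
        rw [RightAct.act_mul]
      · have hxs := hDncl x hx s
        simp only [dif_neg hx, dif_neg hxs]
        rfl
    · intro c hc
      have hcD : c ∈ D := hCD hc
      simp only [dif_pos hcD]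
      rw [hfc c hc]
      refine congrArg (fun v => (⟨⟨true⟩, v⟩ : Σ i, ucFam S i)) ?_
      apply Subtype.ext
      funext w
      exact hkey c hc w

end Main

/-- TFAE: (i) InD-injectivity is transferred from coproducts to their
components; (ii) PInD-injectivity is transferred from coproducts to their components;
(iii) `S` is not left reversible or contains a left zero. -/
theorem coproduct_components_inDInjective_tfae (S : Type u) [Monoid S] :
    List.TFAE [
      ∀ (I : Type u) [Nonempty I] (A : I → Type u) [∀ i, RightAct S (A i)],
        InDInjective S (Σ i, A i) → ∀ i, InDInjective S (A i),
      ∀ (I : Type u) [Nonempty I] (A : I → Type u) [∀ i, RightAct S (A i)],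
        PInDInjective S (Σ i, A i) → ∀ i, PInDInjective S (A i),
      ¬ LeftReversible S ∨ ∃ z : S, IsLeftZero S z ] := by
  tfae_have 3 → 1 := by
    intro h3 I _ A _ hSig i
    rcases h3 with hnlr | ⟨z, hz⟩
    · unfold LeftReversible at hnlr
      push_neg at hnlr
      obtain ⟨a, b, hab⟩ := hnlr
      obtain ⟨θ, hθ⟩ := zero_of_pInD_sigma_of_not_leftRev (inD_imp_pInD hSig) hab i
      exact component_inD_of_zero hSig i θ hθ
    · obtain ⟨u₀⟩ : Nonempty (A i) := RightAct.nonempty (S := S)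
      refine component_inD_of_zero hSig i (u₀ ⊛ z) (fun s => ?_)
      rw [RightAct.act_mul, hz s]
  tfae_have 3 → 2 := by
    intro h3 I _ A _ hSig i
    rcases h3 with hnlr | ⟨z, hz⟩
    · unfold LeftReversible at hnlr
      push_neg at hnlr
      obtain ⟨a, b, hab⟩ := hnlr
      obtain ⟨θ, hθ⟩ := zero_of_pInD_sigma_of_not_leftRev hSig hab i
      exact component_pInD_of_zero hSig i θ hθ
    · obtain ⟨u₀⟩ : Nonempty (A i) := RightAct.nonempty (S := S)
      refine component_pInD_of_zero hSig i (u₀ ⊛ z) (fun s => ?_)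
      rw [RightAct.act_mul, hz s]
  tfae_have 1 → 3 := by
    intro h1
    by_contra h3
    rw [not_or, not_not] at h3
    obtain ⟨hLR, hnz⟩ := h3
    have hInD := sigma_ucFam_inD (S := S) hLR hnz
    have h := h1 (ULift.{u} Bool) (ucFam S) hInD ⟨true⟩
    obtain ⟨θ, hθ⟩ := pInD_has_zero (inD_imp_pInD h)
    exact uc_no_zero hnz θ hθ
  tfae_have 2 → 3 := by
    intro h2
    by_contra h3
    rw [not_or, not_not] at h3
    obtain ⟨hLR, hnz⟩ := h3
    have hInD := sigma_ucFam_inD (S := S) hLR hnz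
    have h := h2 (ULift.{u} Bool) (ucFam S) (inD_imp_pInD hInD) ⟨true⟩
    obtain ⟨θ, hθ⟩ := pInD_has_zero h
    exact uc_no_zero hnz θ hθ
  tfae_finish
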